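/- Let θ_0,...,θ_K ∈ ℝ^D each be strictly increasing in coordinates. Then there exists ε > 0 such that for every nontrivial permutation g ∈ S_D acting on ℝ^D by permuting coordinates and every θ in the ε-tube around the Bézier curve b, the permuted vector gθ is not in the ε-tube. -/

import Mathlib

private lemma coord_abs_le_norm {D : ℕ} (x : EuclideanSpace ℝ (Fin D)) (j : Fin D) :
    |x j| ≤ ‖x‖ := by
  rw [EuclideanSpace.norm_eq]
  have h1 : |x j| = Real.sqrt (‖x j‖ ^ 2) := by
    rw [Real.sqrt_sq_eq_abs, abs_norm, Real.norm_eq_abs]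
  rw [h1]
  exact Real.sqrt_le_sqrt (Finset.single_le_sum (f := fun i => ‖x i‖ ^ 2)
    (fun i _ => sq_nonneg _) (Finset.mem_univ j))

theorem tube_permutation_free
    (K D : ℕ) (θ : Fin (K + 1) → EuclideanSpace ℝ (Fin D))
    (hθ : ∀ k : Fin (K + 1), ∀ i : ℕ, ∀ hi : i + 1 < D,
      θ k ⟨i, Nat.lt_of_succ_lt hi⟩ < θ k ⟨i + 1, hi⟩) :
    ∃ ε > (0:ℝ), ∀ g : Equiv.Perm (Fin D), g ≠ 1 →
      ∀ v gv : EuclideanSpace ℝ (Fin D), (∀ i, gv i = v (g⁻¹ i)) →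
        (∃ t ∈ Set.Icc (0:ℝ) 1,
          ‖(∑ k : Fin (K + 1),
              ((K.choose k : ℝ) * (1 - t) ^ (K - (k : ℕ)) * t ^ (k : ℕ)) • θ k) - v‖ < ε) →
        ¬ (∃ t ∈ Set.Icc (0:ℝ) 1,
          ‖(∑ k : Fin (K + 1),
              ((K.choose k : ℝ) * (1 - t) ^ (K - (k : ℕ)) * t ^ (k : ℕ)) • θ k) - gv‖ < ε) := by
  rcases Nat.lt_or_ge D 2 with hD | hD
  · refine ⟨1, one_pos, fun g hg => absurd ?_ hg⟩
    interval_cases D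
    · exact Equiv.ext fun i => i.elim0
    · exact Equiv.ext fun i => Subsingleton.elim _ _
  obtain ⟨d, rfl⟩ : ∃ d, D = d + 2 := ⟨D - 2, by omega⟩
  set c : ℝ → Fin (K+1) → ℝ :=
    fun t k => ((K.choose k : ℝ) * (1 - t) ^ (K - (k : ℕ)) * t ^ (k : ℕ)) with hc
  -- minimal gap among control points
  have hne : (Finset.univ : Finset (Fin (K+1) × Fin (d+1))).Nonempty :=
    ⟨(⟨0, Nat.succ_pos K⟩, ⟨0, Nat.succ_pos d⟩), Finset.mem_univ _⟩
  set f : Fin (K+1) × Fin (d+1) → ℝ := fun p =>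
    θ p.1 ⟨p.2.val + 1, by omega⟩ - θ p.1 ⟨p.2.val, by omega⟩ with hf
  set m : ℝ := Finset.inf' Finset.univ hne f with hm
  have hmpos : 0 < m := by
    rw [hm, Finset.lt_inf'_iff]
    intro p _
    have := hθ p.1 p.2.val (by omega)
    simpa [hf, sub_pos] using this
  -- coefficients are nonnegative and sum to 1 on [0,1]
  have hcnn : ∀ t ∈ Set.Icc (0:ℝ) 1, ∀ k, 0 ≤ c t k := by
    rintro t ⟨h0, h1⟩ k
    have : (0:ℝ) ≤ 1 - t := by linarith
    positivity
  have hcsum : ∀ t : ℝ, ∑ k : Fin (K+1), c t k = 1 := by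
    intro t
    have h := add_pow t (1 - t) K
    simp only [add_sub_cancel, one_pow] at h
    rw [hc, Fin.sum_univ_eq_sum_range (fun k => ((K.choose k : ℝ) * (1 - t) ^ (K - k) * t ^ k))]
    have h2 : ∑ k ∈ Finset.range (K+1), (K.choose k : ℝ) * (1 - t) ^ (K - k) * t ^ k
        = ∑ k ∈ Finset.range (K+1), t ^ k * (1 - t) ^ (K - k) * (K.choose k : ℝ) :=
      Finset.sum_congr rfl fun k _ => by ring
    rw [h2, ← h]
  -- component formula
  have happ : ∀ (t : ℝ) (j : Fin (d+2)),
      (∑ k : Fin (K+1), (c t k) • θ k) j = ∑ k : Fin (K+1), c t k * θ k j := by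
    intro t j
    rw [WithLp.ofLp_sum, Finset.sum_apply]
    exact Finset.sum_congr rfl fun k _ => rfl
  -- gap of the curve
  have hgap : ∀ t ∈ Set.Icc (0:ℝ) 1, ∀ i : ℕ, (hi : i + 1 < d + 2) →
      m ≤ (∑ k : Fin (K+1), (c t k) • θ k) ⟨i+1, hi⟩
        - (∑ k : Fin (K+1), (c t k) • θ k) ⟨i, by omega⟩ := by
    intro t ht i hi
    rw [happ, happ, ← Finset.sum_sub_distrib]
    have : ∀ k : Fin (K+1), k ∈ Finset.univ →
        c t k * m ≤ c t k * θ k ⟨i+1, hi⟩ - c t k * θ k ⟨i, by omega⟩ := by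
      intro k _
      rw [← mul_sub]
      apply mul_le_mul_of_nonneg_left _ (hcnn t ht k)
      have hmem : (k, (⟨i, by omega⟩ : Fin (d+1))) ∈ (Finset.univ : Finset _) :=
        Finset.mem_univ _
      exact Finset.inf'_le f hmem
    calc m = (∑ k : Fin (K+1), c t k) * m := by rw [hcsum]; ring
    _ = ∑ k : Fin (K+1), c t k * m := by rw [Finset.sum_mul]
    _ ≤ _ := Finset.sum_le_sum this
  refine ⟨m / 4, by linarith, fun g hg v gv hgv hv hw => ?_⟩
  obtain ⟨t, ht, hvt⟩ := hv
  obtain ⟨s, hs, hws⟩ := hw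
  -- coordinates of v (resp. gv) are within ε of the curve at t (resp. s)
  have hvb : ∀ j : Fin (d+2), |(∑ k : Fin (K+1), (c t k) • θ k) j - v j| < m / 4 := by
    intro j
    have := (coord_abs_le_norm ((∑ k : Fin (K+1), (c t k) • θ k) - v) j).trans_lt hvt
    simpa using this
  have hwb : ∀ j : Fin (d+2), |(∑ k : Fin (K+1), (c s k) • θ k) j - gv j| < m / 4 := by
    intro j
    have := (coord_abs_le_norm ((∑ k : Fin (K+1), (c s k) • θ k) - gv) j).trans_lt hws
    simpa using this
  -- v and gv are strictly monotone
  have hvmono : StrictMono (fun j : Fin (d+2) => v j) := by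
    rw [Fin.strictMono_iff_lt_succ]
    intro i
    have h1 := hgap t ht i.val (by omega)
    have h2 := abs_lt.1 (hvb ⟨i.val, by omega⟩)
    have h3 := abs_lt.1 (hvb ⟨i.val + 1, by omega⟩)
    have e1 : (Fin.castSucc i) = (⟨i.val, by omega⟩ : Fin (d+2)) := rfl
    have e2 : i.succ = (⟨i.val + 1, by omega⟩ : Fin (d+2)) := rfl
    rw [e1, e2]
    linarith [h1, h2.1, h2.2, h3.1, h3.2]
  have hwmono : StrictMono (fun j : Fin (d+2) => gv j) := by
    rw [Fin.strictMono_iff_lt_succ]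
    intro i
    have h1 := hgap s hs i.val (by omega)
    have h2 := abs_lt.1 (hwb ⟨i.val, by omega⟩)
    have h3 := abs_lt.1 (hwb ⟨i.val + 1, by omega⟩)
    have e1 : (Fin.castSucc i) = (⟨i.val, by omega⟩ : Fin (d+2)) := rfl
    have e2 : i.succ = (⟨i.val + 1, by omega⟩ : Fin (d+2)) := rfl
    rw [e1, e2]
    linarith [h1, h2.1, h2.2, h3.1, h3.2]
  -- gv = v ∘ g⁻¹, so ranges agree and strict monotonicity forces g = 1
  have hcompeq : (fun j : Fin (d+2) => gv j) = (fun j => v j) ∘ ⇑(g⁻¹) := funext hgv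
  have hrange : Set.range (fun j : Fin (d+2) => gv j) = Set.range (fun j => v j) := by
    rw [hcompeq]
    exact (g⁻¹).surjective.range_comp _
  have heq : (fun j : Fin (d+2) => gv j) = (fun j => v j) :=
    (@StrictMono.range_inj (Fin (d+2)) ℝ _ _
      (inferInstance : WellFoundedLT (Fin (d+2))) _ _ hwmono hvmono).1 hrange
  apply hg
  apply Equiv.ext
  intro i
  show g i = i
  have h1 : v (g⁻¹ i) = v i := by
    rw [← hgv i]; exact congrFun heq i
  have h2 : g⁻¹ i = i := hvmono.injective h1
  calc g i = g (g⁻¹ i) := by rw [h2]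
  _ = i := g.apply_symm_apply i
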